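/- Let T be a subtree of ᵂ>2 and u ⊆ ω infinite, and suppose for some j* < ω, for all j₀ < j₁ in u with j* < j₀, T has a splitting node of level in [j₀,j₁). If n₀ < n₁ < n₂ < … is a sequence with |(nᵢ, nᵢ₊₁) ∩ u| > 2^{nᵢ} + 2 for all i, then for every i > j*, |T ∩ ^{n_{i+1}}2| > 2^{nᵢ}. -/

import Mathlib

def IsSubtree (T : Set (List Bool)) : Prop :=
  T.Nonempty ∧ (∀ η ∈ T, ∀ ν, ν <+: η → ν ∈ T) ∧
    ∀ η ∈ T, ∃ ν ∈ T, η <+: ν ∧ η ≠ ν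

def IsSplit (T : Set (List Bool)) (η : List Bool) : Prop :=
  η ∈ T ∧ η ++ [false] ∈ T ∧ η ++ [true] ∈ T

open Classical in
lemma levelFin (T : Set (List Bool)) (k : ℕ) : {η ∈ T | η.length = k}.Finite :=
  (List.finite_length_eq Bool k).subset (fun _ h => h.2)

lemma ext_one {T : Set (List Bool)} (hT : IsSubtree T) {η : List Bool} (hη : η ∈ T) :
    ∃ ν ∈ T, η <+: ν ∧ ν.length = η.length + 1 := by
  obtain ⟨_, hdc, hext⟩ := hT
  obtain ⟨ν, hν, hpre, hne⟩ := hext η hη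
  have hlt : η.length < ν.length := by
    rcases lt_or_eq_of_le hpre.length_le with h | h
    · exact h
    · exact absurd (hpre.eq_of_length h) hne
  refine ⟨ν.take (η.length + 1), hdc ν hν _ (List.take_prefix _ _), ?_, ?_⟩
  · rw [List.prefix_take_iff]; exact ⟨hpre, Nat.le_succ _⟩
  · rw [List.length_take]; omega

lemma ext_to {T : Set (List Bool)} (hT : IsSubtree T) {η : List Bool} (hη : η ∈ T) :
    ∀ k, η.length ≤ k → ∃ ν ∈ T, η <+: ν ∧ ν.length = k := by
  intro k
  induction k with
  | zero => intro h; exact ⟨η, hη, List.prefix_refl _, Nat.le_zero.mp h⟩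
  | succ k ih =>
    intro h
    rcases Nat.lt_or_ge η.length (k + 1) with h' | h'
    · obtain ⟨ν, hν, hpre, hlen⟩ := ih (by omega)
      obtain ⟨ν', hν', hpre', hlen'⟩ := ext_one hT hν
      exact ⟨ν', hν', hpre.trans hpre', by omega⟩
    · exact ⟨η, hη, List.prefix_refl _, by omega⟩

lemma level_mono {T : Set (List Bool)} (hT : IsSubtree T) {k k' : ℕ} (h : k ≤ k') :
    {η ∈ T | η.length = k}.ncard ≤ {η ∈ T | η.length = k'}.ncard := by
  have hch : ∀ η ∈ {η ∈ T | η.length = k}, ∃ ν ∈ T, η <+: ν ∧ ν.length = k' :=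
    fun η hη => ext_to hT hη.1 k' (hη.2 ▸ h)
  choose f hf1 hf2 hf3 using hch
  classical
  refine Set.ncard_le_ncard_of_injOn (fun η => if hη : η ∈ {η ∈ T | η.length = k} then f η hη else η)
    ?_ ?_ (levelFin T k')
  · intro η hη; beta_reduce; rw [dif_pos hη]; exact ⟨hf1 η hη, hf3 η hη⟩
  · intro η₁ h₁ η₂ h₂ heq
    beta_reduce at heq
    rw [dif_pos h₁, dif_pos h₂] at heq
    have p1 := hf2 η₁ h₁
    have p2 := hf2 η₂ h₂
    rw [heq] at p1
    have hle : η₁.length ≤ η₂.length := by rw [h₁.2, h₂.2]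
    exact (List.prefix_of_prefix_length_le p1 p2 hle).eq_of_length (by rw [h₁.2, h₂.2])

lemma level_pos {T : Set (List Bool)} (hT : IsSubtree T) (k : ℕ) :
    1 ≤ {η ∈ T | η.length = k}.ncard := by
  have hroot : [] ∈ T := by
    obtain ⟨⟨η, hη⟩, hdc, _⟩ := hT
    exact hdc η hη [] List.nil_prefix
  obtain ⟨ν, hν, _, hlen⟩ := ext_to hT hroot k (Nat.zero_le k)
  have : ν ∈ {η ∈ T | η.length = k} := ⟨hν, hlen⟩
  exact (Set.ncard_pos (levelFin T k)).mpr ⟨ν, this⟩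

open Classical in
lemma split_step {T : Set (List Bool)} (hT : IsSubtree T) {η : List Bool} (hs : IsSplit T η) :
    {ν ∈ T | ν.length = η.length}.ncard + 1 ≤ {ν ∈ T | ν.length = η.length + 1}.ncard := by
  classical
  set k := η.length
  set L := {ν ∈ T | ν.length = k} with hL
  set e : List Bool → List Bool := fun ν => if ν ++ [true] ∈ T then ν ++ [true] else ν ++ [false]
    with he
  have hsucc : ∀ ν ∈ L, ∃ b : Bool, ν ++ [b] ∈ T := by
    intro ν hν
    obtain ⟨ν', hν', hpre, hlen⟩ := ext_one hT hν.1
    obtain ⟨t, rfl⟩ := hpre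
    have : t.length = 1 := by
      have := hν.2
      simp at hlen; omega
    obtain ⟨b, rfl⟩ : ∃ b, t = [b] := by
      rcases t with _ | ⟨b, rest⟩
      · simp at this
      · simp at this; exact ⟨b, by rw [this]⟩
    exact ⟨b, hν'⟩
  have heT : ∀ ν ∈ L, e ν ∈ T := by
    intro ν hν
    by_cases h : ν ++ [true] ∈ T
    · simpa [he, h] using h
    · obtain ⟨b, hb⟩ := hsucc ν hν
      cases b
      · simpa [he, h] using hb
      · exact absurd hb h
  have hinj : Set.InjOn e L := by
    intro ν₁ h₁ ν₂ h₂ heq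
    simp only [he] at heq
    split_ifs at heq <;>
      exact (List.append_inj' heq rfl).1
  have hsub : insert (η ++ [false]) (e '' L) ⊆ {ν ∈ T | ν.length = k + 1} := by
    rintro x (rfl | ⟨ν, hν, rfl⟩)
    · exact ⟨hs.2.1, by simp; rfl⟩
    · refine ⟨heT ν hν, ?_⟩
      have := hν.2
      by_cases h : ν ++ [true] ∈ T <;> simp [he, h, this]
  have hnm : η ++ [false] ∉ e '' L := by
    rintro ⟨ν, hν, heq⟩
    by_cases h : ν ++ [true] ∈ T
    · simp only [he, if_pos h] at heq
      have := (List.append_inj' heq rfl).2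
      simp at this
    · simp only [he, if_neg h] at heq
      have := (List.append_inj' heq rfl).1
      exact h (this ▸ hs.2.2)
  have hLfin : L.Finite := levelFin T k
  calc L.ncard + 1 = (e '' L).ncard + 1 := by rw [Set.ncard_image_of_injOn hinj]
    _ = (insert (η ++ [false]) (e '' L)).ncard := (Set.ncard_insert_of_notMem hnm (hLfin.image e)).symm
    _ ≤ _ := Set.ncard_le_ncard hsub (levelFin T (k+1))

lemma split_jump {T : Set (List Bool)} (hT : IsSubtree T) {η : List Bool} {b : ℕ}
    (hs : IsSplit T η) (hb : η.length < b) :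
    {ν ∈ T | ν.length = η.length}.ncard + 1 ≤ {ν ∈ T | ν.length = b}.ncard :=
  le_trans (split_step hT hs) (level_mono hT hb)

lemma countG (T : Set (List Bool)) (hT : IsSubtree T) (u : Set ℕ) (jstar : ℕ)
    (hsp : ∀ j₀ j₁ : ℕ, j₀ ∈ u → j₁ ∈ u → jstar < j₀ → j₀ < j₁ →
      ∃ η, IsSplit T η ∧ j₀ ≤ η.length ∧ η.length < j₁) :
    ∀ m a b, a ∈ u → b ∈ u → jstar < a → a < b →
      m ≤ {x ∈ u | a < x ∧ x < b}.ncard →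
      m + 1 < {η ∈ T | η.length = b}.ncard := by
  intro m
  induction m with
  | zero =>
    intro a b ha hb hja hab _
    obtain ⟨η, hsplit, _, hηb⟩ := hsp a b ha hb hja hab
    have h1 : 1 ≤ {ν ∈ T | ν.length = η.length}.ncard := level_pos hT _
    have := split_jump hT hsplit hηb
    omega
  | succ m ih =>
    intro a b ha hb hja hab hm
    set B := {x ∈ u | a < x ∧ x < b} with hB
    have hBfin : B.Finite := (Set.finite_Iio b).subset (fun x hx => hx.2.2)
    have hBne : B.Nonempty := by
      rw [← Set.ncard_pos hBfin]; omega
    have hBne' : hBfin.toFinset.Nonempty := by simpa using hBne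
    set c := hBfin.toFinset.max' hBne' with hc
    have hcB : c ∈ B := by
      have := hBfin.toFinset.max'_mem hBne'; simpa using this
    have hcmax : ∀ x ∈ B, x ≤ c := fun x hx => Finset.le_max' _ x (by simpa using hx)
    have hdiff : B \ {c} = {x ∈ u | a < x ∧ x < c} := by
      ext x
      simp only [Set.mem_diff, Set.mem_singleton_iff, hB, Set.mem_setOf_eq]
      constructor
      · rintro ⟨⟨hxu, hax, hxb⟩, hxc⟩
        exact ⟨hxu, hax, lt_of_le_of_ne (hcmax x ⟨hxu, hax, hxb⟩) hxc⟩
      · rintro ⟨hxu, hax, hxc⟩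
        exact ⟨⟨hxu, hax, hxc.trans hcB.2.2⟩, ne_of_lt hxc⟩
    have hdcard : {x ∈ u | a < x ∧ x < c}.ncard = B.ncard - 1 := by
      rw [← hdiff]; exact Set.ncard_diff_singleton_of_mem hcB
    have hIH : m + 1 < {η ∈ T | η.length = c}.ncard :=
      ih a c ha hcB.1 hja hcB.2.1 (by omega)
    obtain ⟨η, hsplit, hcη, hηb⟩ := hsp c b hcB.1 hb (lt_trans hja hcB.2.1) hcB.2.2
    have hmono : {ν ∈ T | ν.length = c}.ncard ≤ {ν ∈ T | ν.length = η.length}.ncard :=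
      level_mono hT hcη
    have hjmp := split_jump hT hsplit hηb
    omega

/-- If for some `j*`, `T` has a splitting node of level in `[j₀, j₁)` for all
`j₀ < j₁` in `u` with `j* < j₀`, and `⟨nᵢ⟩` is strictly increasing with
`|(nᵢ, nᵢ₊₁) ∩ u| > 2^{nᵢ} + 2`, then for every `i > j*` we have
`|T ∩ ^{n_{i+1}}2| > 2^{nᵢ}`. -/
theorem stmt2 (T : Set (List Bool)) (hT : IsSubtree T) (u : Set ℕ)
    (hu : u.Infinite) (jstar : ℕ)
    (hsp : ∀ j₀ j₁ : ℕ, j₀ ∈ u → j₁ ∈ u → jstar < j₀ → j₀ < j₁ →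
      ∃ η, IsSplit T η ∧ j₀ ≤ η.length ∧ η.length < j₁)
    (n : ℕ → ℕ) (hn : StrictMono n)
    (hcount : ∀ i, 2 ^ (n i) + 2 < {x ∈ u | n i < x ∧ x < n (i + 1)}.ncard) :
    ∀ i, jstar < i → 2 ^ (n i) < {η ∈ T | η.length = n (i + 1)}.ncard := by
  intro i hi
  have hcnt := hcount i
  set B := {x ∈ u | n i < x ∧ x < n (i + 1)} with hB
  have hBfin : B.Finite := (Set.finite_Iio (n (i + 1))).subset (fun x hx => hx.2.2)
  have hBne : B.Nonempty := by
    rw [← Set.ncard_pos hBfin]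
    have h1 : 0 ≤ 2 ^ (n i) := Nat.zero_le _
    omega
  have hBne' : hBfin.toFinset.Nonempty := by simpa using hBne
  set a := hBfin.toFinset.min' hBne' with haa
  set b := hBfin.toFinset.max' hBne' with hbb
  have haB : a ∈ B := by have := hBfin.toFinset.min'_mem hBne'; simpa using this
  have hbB : b ∈ B := by have := hBfin.toFinset.max'_mem hBne'; simpa using this
  have hamin : ∀ x ∈ B, a ≤ x := fun x hx => Finset.min'_le _ x (by simpa using hx)
  have hbmax : ∀ x ∈ B, x ≤ b := fun x hx => Finset.le_max' _ x (by simpa using hx)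
  have hcard2 : 1 < hBfin.toFinset.card := by
    rw [← Set.ncard_eq_toFinset_card _ hBfin]
    have : 1 ≤ 2 ^ (n i) := Nat.one_le_two_pow
    omega
  have hab : a < b := Finset.min'_lt_max'_of_card _ hcard2
  have hja : jstar < a := lt_of_lt_of_le hi (le_trans hn.le_apply (le_of_lt haB.2.1))
  have hdiff : (B \ {a}) \ {b} = {x ∈ u | a < x ∧ x < b} := by
    ext x
    simp only [Set.mem_diff, Set.mem_singleton_iff, hB, Set.mem_setOf_eq]
    constructor
    · rintro ⟨⟨⟨hxu, hnx, hxn⟩, hxa⟩, hxb⟩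
      exact ⟨hxu, lt_of_le_of_ne (hamin x ⟨hxu, hnx, hxn⟩) (Ne.symm hxa),
        lt_of_le_of_ne (hbmax x ⟨hxu, hnx, hxn⟩) hxb⟩
    · rintro ⟨hxu, hax, hxb⟩
      exact ⟨⟨⟨hxu, lt_trans haB.2.1 hax, lt_trans hxb hbB.2.2⟩,
        (ne_of_lt hax).symm⟩, ne_of_lt hxb⟩
  have hbmem : b ∈ B \ {a} := ⟨hbB, ne_of_gt hab⟩
  have hdcard : {x ∈ u | a < x ∧ x < b}.ncard = B.ncard - 2 := by
    rw [← hdiff, Set.ncard_diff_singleton_of_mem hbmem,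
      Set.ncard_diff_singleton_of_mem haB]
    omega
  have hpow1 : 1 ≤ 2 ^ (n i) := Nat.one_le_two_pow
  have hkey := countG T hT u jstar hsp (2 ^ (n i) - 1) a b haB.1 hbB.1 hja hab (by omega)
  have hmono : {η ∈ T | η.length = b}.ncard ≤ {η ∈ T | η.length = n (i + 1)}.ncard :=
    level_mono hT (le_of_lt hbB.2.2)
  omega
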